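/- arXiv:1011.1868 — 3 statements merged into one kernel-verified Lean document; each statement's English description precedes it below -/
import Mathlib

section
/- Let 0 < ε < 1/6 and set ε' = ε − 6ε² (so ε' > 0). Let n ≥ 2 and R ≥ 1 be natural numbers, let m be a natural number with m ≥ (1−2ε)·n·R, and let X₁, …, X_m be independent random variables each uniformly distributed on Fin n. Let I ⊆ Fin n be a set with |I| ≥ (1+3ε)·ln(n)/R. Then the probability that X_i ∉ I for all i = 1, …, m is at most n^(−1−ε'). -/
open MeasureTheory ProbabilityTheory
open scoped ENNReal

/-- Second-phase estimate in the upper-bound analysis of the hybrid rumor-spreading protocol: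
`m ≥ (1-2ε)nR` independent uniform random calls all avoid a fixed set `I` of at least
`(1+3ε)·ln(n)/R` nodes with probability at most `n^(-1-ε')`, where `ε' = ε - 6ε²`. -/
theorem stmt1 {Ω : Type*} [MeasurableSpace Ω] (μ : Measure Ω) [IsProbabilityMeasure μ]
    (ε ε' : ℝ) (hε : 0 < ε) (hε6 : ε < 1/6) (hε' : ε' = ε - 6*ε^2)
    (n R m : ℕ) (hn : 2 ≤ n) (hR : 1 ≤ R) (hm : (1 - 2*ε) * n * R ≤ (m : ℝ))
    (X : Fin m → Ω → Fin n) (hmeas : ∀ i, Measurable (X i))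
    (hindep : iIndepFun X μ)
    (hunif : ∀ i (a : Fin n), μ {ω | X i ω = a} = 1 / n)
    (I : Finset (Fin n)) (hI : (1 + 3*ε) * Real.log n / R ≤ (I.card : ℝ)) :
    μ {ω | ∀ i, X i ω ∉ I} ≤ ENNReal.ofReal ((n : ℝ) ^ (-1 - ε')) := by
  have hn0 : (0:ℝ) < n := by positivity
  have hR0 : (0:ℝ) < R := by exact_mod_cast hR
  have hlogn : 0 < Real.log n := Real.log_pos (by exact_mod_cast hn)
  set k : ℝ := (I.card : ℝ) with hk
  have hk0 : 0 ≤ k := Nat.cast_nonneg _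
  have hcardle : I.card ≤ n := by simpa using I.card_le_univ
  have hkn : k ≤ (n:ℝ) := by rw [hk]; exact_mod_cast hcardle
  -- measure of each event
  have hμi : ∀ i, μ (X i ⁻¹' (↑(Iᶜ) : Set (Fin n))) = ENNReal.ofReal ((n - k) / n) := by
    intro i
    have hset : (X i ⁻¹' (↑(Iᶜ) : Set (Fin n))) = ⋃ a ∈ Iᶜ, {ω | X i ω = a} := by
      ext ω; simp
    have hdisj : (↑(Iᶜ) : Set (Fin n)).PairwiseDisjoint (fun a => {ω | X i ω = a}) := by
      intro a _ b _ hab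
      simp only [Set.disjoint_left, Set.mem_setOf_eq]
      intro ω h1 h2; exact hab (h1 ▸ h2 ▸ rfl)
    have hmeasa : ∀ a ∈ Iᶜ, MeasurableSet {ω | X i ω = a} := by
      intro a _
      exact (hmeas i) (measurableSet_singleton a)
    rw [hset, measure_biUnion_finset hdisj hmeasa]
    have hcard : (Iᶜ.card : ℝ) = n - k := by
      rw [Finset.card_compl]
      push_cast [Fintype.card_fin, Nat.cast_sub hcardle]
      ring
    calc ∑ a ∈ Iᶜ, μ {ω | X i ω = a} = ∑ a ∈ Iᶜ, 1 / (n : ℝ≥0∞) := by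
          exact Finset.sum_congr rfl fun a _ => hunif i a
      _ = (Iᶜ.card : ℝ≥0∞) * (1 / n) := by rw [Finset.sum_const, nsmul_eq_mul]
      _ = ENNReal.ofReal ((n - k) / n) := by
          rw [ENNReal.ofReal_div_of_pos hn0, ← hcard]
          simp [ENNReal.ofReal_natCast, div_eq_mul_inv, one_mul]
  -- independence
  have hset2 : {ω | ∀ i, X i ω ∉ I} = ⋂ i, X i ⁻¹' (↑(Iᶜ) : Set (Fin n)) := by
    ext ω; simp
  have hprod : μ {ω | ∀ i, X i ω ∉ I} = ENNReal.ofReal ((n - k) / n) ^ m := by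
    rw [hset2, hindep.meas_iInter (fun i => ⟨(↑(Iᶜ) : Set (Fin n)),
      MeasurableSet.of_discrete, rfl⟩)]
    rw [Finset.prod_congr rfl (fun i _ => hμi i), Finset.prod_const, Finset.card_univ,
      Fintype.card_fin]
  rw [hprod, ← ENNReal.ofReal_pow (div_nonneg (by linarith) hn0.le)]
  apply ENNReal.ofReal_le_ofReal
  -- real inequality
  have hbase : (n - k) / n ≤ Real.exp (-(k / n)) := by
    have := Real.add_one_le_exp (-(k / n))
    have h2 : ((n:ℝ) - k) / n = -(k/n) + 1 := by field_simp; ring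
    linarith
  have hε2 : (0:ℝ) < 1 - 2*ε := by linarith
  have hmk : (1 + ε') * Real.log n ≤ (m : ℝ) * k / n := by
    have h1 : (1 - 2*ε) * n * R * ((1 + 3*ε) * Real.log n / R) ≤ (m : ℝ) * k :=
      mul_le_mul hm hI (by positivity) (Nat.cast_nonneg _)
    have h2 : (1 - 2*ε) * n * R * ((1 + 3*ε) * Real.log n / R)
        = (1 + ε') * Real.log n * n := by
      field_simp; rw [hε']; ring
    rw [h2] at h1
    rw [le_div_iff₀ hn0]
    exact h1
  have e1 : (((n:ℝ) - k) / n) ^ m ≤ Real.exp (-(k / n)) ^ m :=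
    pow_le_pow_left₀ (div_nonneg (by linarith) hn0.le) hbase m
  have e2 : Real.exp (-(k / n)) ^ m = Real.exp ((m : ℝ) * (-(k / n))) := (Real.exp_nat_mul _ m).symm
  have e3 : Real.exp ((m : ℝ) * (-(k / n))) ≤ Real.exp (Real.log n * (-1 - ε')) := by
    apply Real.exp_le_exp.mpr
    have h3 : Real.log n * (-1 - ε') = -((1 + ε') * Real.log n) := by ring
    have h4 : (m : ℝ) * (-(k / n)) = -((m : ℝ) * k / n) := by ring
    rw [h3, h4]
    linarith
  have e4 : (n : ℝ) ^ (-1 - ε') = Real.exp (Real.log n * (-1 - ε')) :=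
    Real.rpow_def_of_pos hn0 _
  rw [e4]
  exact (e1.trans (e2 ▸ e3))
end

section
/- Let 0 < ε < 1/6 and set ε' = ε − 6ε². Let n ≥ 2 and R ≥ 1 be natural numbers, let m be a natural number with m ≥ (1−2ε)·n·R, and let X₁, …, X_m be independent random variables each uniformly distributed on ZMod n. Let L = ⌈(1+3ε)·ln(n)/R⌉. Then the probability that there exists some a ∈ ZMod n such that the cyclic interval {a, a+1, …, a+L−1} ⊆ ZMod n contains none of the values X₁, …, X_m is at most n^(−ε'). -/
open MeasureTheory ProbabilityTheory
open scoped ENNReal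

/-- Union-bound step in the upper-bound proof of the hybrid rumor-spreading protocol:
with `m ≥ (1-2ε)nR` independent uniform random calls on the `n` nodes (identified with
`ZMod n`), the probability that some cyclic interval `{a, a+1, …, a+L-1}` of length
`L = ⌈(1+3ε)·ln(n)/R⌉` contains none of the call targets is at most `n^(-ε')`,
where `ε' = ε - 6ε²`. -/
theorem stmt2 {Ω : Type*} [MeasurableSpace Ω] (μ : Measure Ω) [IsProbabilityMeasure μ]
    (ε ε' : ℝ) (hε : 0 < ε) (hε6 : ε < 1/6) (hε' : ε' = ε - 6*ε^2)
    (n R m : ℕ) (hn : 2 ≤ n) (hR : 1 ≤ R) (hm : (1 - 2*ε) * n * R ≤ (m : ℝ))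
    [MeasurableSpace (ZMod n)] [MeasurableSingletonClass (ZMod n)]
    (X : Fin m → Ω → ZMod n) (hmeas : ∀ i, Measurable (X i))
    (hindep : iIndepFun X μ)
    (hunif : ∀ i (a : ZMod n), μ {ω | X i ω = a} = 1 / n)
    (L : ℕ) (hL : L = ⌈(1 + 3*ε) * Real.log n / R⌉₊) :
    μ {ω | ∃ a : ZMod n, ∀ t : ℕ, t < L → ∀ i, X i ω ≠ a + (t : ZMod n)} ≤
      ENNReal.ofReal ((n : ℝ) ^ (-ε')) := by
  haveI : NeZero n := ⟨by omega⟩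
  have hn1 : (1 : ℝ) < n := by exact_mod_cast hn
  have hn0 : (0 : ℝ) < n := by linarith
  have hR0 : (0 : ℝ) < R := by exact_mod_cast hR
  have hlogn : 0 < Real.log n := Real.log_pos hn1
  have hε2 : (0 : ℝ) < 1 - 2*ε := by linarith
  -- m ≥ 1
  have hm1 : 1 ≤ m := by
    by_contra h
    push_neg at h
    interval_cases m
    simp only [Nat.cast_zero] at hm
    nlinarith [mul_pos (mul_pos hε2 hn0) hR0]
  have hrpos : (0 : ℝ) < (n : ℝ) ^ (-ε') := Real.rpow_pos_of_pos hn0 _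
  by_cases hLn : n ≤ L
  · -- the interval covers everything; the event is empty
    have : {ω | ∃ a : ZMod n, ∀ t : ℕ, t < L → ∀ i, X i ω ≠ a + (t : ZMod n)} = ∅ := by
      ext ω
      simp only [Set.mem_setOf_eq, Set.mem_empty_iff_false, iff_false, not_exists]
      intro a h
      have i0 : Fin m := ⟨0, hm1⟩
      have ht : (X i0 ω - a).val < L := lt_of_lt_of_le (ZMod.val_lt _) hLn
      exact h _ ht i0 (by rw [ZMod.natCast_rightInverse]; ring)
    rw [this]
    simp [le_of_lt hrpos]
  push_neg at hLn
  -- the bad set for one value of a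
  set S : ZMod n → Finset (ZMod n) :=
    fun a => (Finset.range L).image (fun t : ℕ => a + (t : ZMod n)) with hS
  have hcard : ∀ a, (S a).card = L := by
    intro a
    rw [hS]
    rw [Finset.card_image_of_injOn, Finset.card_range]
    intro t ht t' ht' h
    simp only [Finset.coe_range, Set.mem_Iio] at ht ht'
    have : (t : ZMod n) = (t' : ZMod n) := by
      have := h; exact add_left_cancel this
    have := congrArg ZMod.val this
    rwa [ZMod.val_natCast_of_lt (by omega), ZMod.val_natCast_of_lt (by omega)] at this
  -- probability a single X i misses S a
  have hmiss : ∀ (i : Fin m) (a : ZMod n),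
      μ (X i ⁻¹' (↑(S a) : Set (ZMod n))ᶜ) = ENNReal.ofReal (1 - (L : ℝ)/n) := by
    intro i a
    have hin : μ (X i ⁻¹' (↑(S a) : Set (ZMod n))) = (L : ℝ≥0∞) / n := by
      have : (X i ⁻¹' (↑(S a) : Set (ZMod n))) = ⋃ x ∈ S a, {ω | X i ω = x} := by
        ext ω; simp
      rw [this, measure_biUnion_finset]
      · rw [Finset.sum_congr rfl (fun x _ => hunif i x)]
        simp [hcard a, ENNReal.div_eq_inv_mul, mul_comm]
      · intro x hx y hy hxy
        simp only [Function.onFun, Set.disjoint_left, Set.mem_setOf_eq]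
        intro ω h1 h2; exact hxy (h1 ▸ h2 ▸ rfl)
      · intro x _
        show MeasurableSet (X i ⁻¹' {x})
        exact (hmeas i) (measurableSet_singleton x)
    rw [Set.preimage_compl, measure_compl ((hmeas i) (Set.Finite.measurableSet (Set.toFinite _)))
      (measure_ne_top μ _), measure_univ, hin]
    have hLn' : (L : ℝ) / n ≤ 1 := by
      rw [div_le_one hn0]; exact_mod_cast hLn.le
    rw [ENNReal.ofReal_sub _ (by positivity), ENNReal.ofReal_one]
    congr 1
    rw [ENNReal.ofReal_div_of_pos hn0]
    simp
  -- the whole bad event as a union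
  have hsub : {ω | ∃ a : ZMod n, ∀ t : ℕ, t < L → ∀ i, X i ω ≠ a + (t : ZMod n)} =
      ⋃ a : ZMod n, ⋂ i, X i ⁻¹' (↑(S a) : Set (ZMod n))ᶜ := by
    ext ω
    simp only [Set.mem_setOf_eq, Set.mem_iUnion, Set.mem_iInter, Set.mem_preimage,
      Set.mem_compl_iff, Finset.coe_image, Finset.coe_range, hS, Set.mem_image, Set.mem_Iio]
    constructor
    · rintro ⟨a, h⟩
      exact ⟨a, fun i ⟨t, ht, he⟩ => h t ht i he.symm⟩
    · rintro ⟨a, h⟩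
      exact ⟨a, fun t ht i he => h i ⟨t, ht, he.symm⟩⟩
  -- probability of the event for a fixed a
  have hEa : ∀ a : ZMod n, μ (⋂ i, X i ⁻¹' (↑(S a) : Set (ZMod n))ᶜ) =
      ENNReal.ofReal (1 - (L : ℝ)/n) ^ m := by
    intro a
    rw [hindep.meas_iInter (fun i => ⟨(↑(S a) : Set (ZMod n))ᶜ,
      (Set.Finite.measurableSet (Set.toFinite _)).compl, rfl⟩)]
    rw [Finset.prod_congr rfl fun i _ => hmiss i a, Finset.prod_const, Finset.card_univ,
      Fintype.card_fin]
  rw [hsub]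
  calc μ (⋃ a : ZMod n, ⋂ i, X i ⁻¹' (↑(S a) : Set (ZMod n))ᶜ)
      ≤ ∑' a : ZMod n, μ (⋂ i, X i ⁻¹' (↑(S a) : Set (ZMod n))ᶜ) := measure_iUnion_le _
    _ = (n : ℝ≥0∞) * ENNReal.ofReal (1 - (L : ℝ)/n) ^ m := by
        rw [tsum_congr hEa, tsum_fintype, Finset.sum_const, Finset.card_univ, ZMod.card,
          nsmul_eq_mul]
    _ = ENNReal.ofReal ((n : ℝ) * (1 - (L : ℝ)/n) ^ m) := by
        have hp : (0:ℝ) ≤ 1 - (L : ℝ)/n := by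
          rw [sub_nonneg, div_le_one hn0]; exact_mod_cast hLn.le
        rw [ENNReal.ofReal_mul (by positivity), ENNReal.ofReal_pow hp, ENNReal.ofReal_natCast]
    _ ≤ ENNReal.ofReal ((n : ℝ) ^ (-ε')) := by
        apply ENNReal.ofReal_le_ofReal
        have hp : (0:ℝ) ≤ 1 - (L : ℝ)/n := by
          rw [sub_nonneg, div_le_one hn0]; exact_mod_cast hLn.le
        have h1 : (1 : ℝ) - (L : ℝ)/n ≤ Real.exp (-((L:ℝ)/n)) := by
          have := Real.add_one_le_exp (-((L:ℝ)/n)); linarith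
        have h2 : ((1 : ℝ) - (L : ℝ)/n) ^ m ≤ Real.exp (-((L:ℝ)/n)) ^ m :=
          pow_le_pow_left₀ hp h1 m
        have h3 : Real.exp (-((L:ℝ)/n)) ^ m = Real.exp (-(m * (L:ℝ)/n)) := by
          rw [← Real.exp_nat_mul]; ring_nf
        -- key arithmetic: m * L ≥ (1+ε') * n * log n
        have hLreal : (1 + 3*ε) * Real.log n / R ≤ (L : ℝ) := by
          rw [hL]; exact Nat.le_ceil _
        have hmL : (1 + ε') * (n * Real.log n) ≤ (m : ℝ) * L := by
          have hmul : ((1 - 2*ε) * n * R) * ((1 + 3*ε) * Real.log n / R) ≤ (m : ℝ) * L := by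
            apply mul_le_mul hm hLreal (by positivity) (by positivity)
          have : ((1 - 2*ε) * n * R) * ((1 + 3*ε) * Real.log n / R)
              = (1 + ε') * (n * Real.log n) := by
            subst hε'
            field_simp
            ring
          linarith [this ▸ hmul]
        have h4 : Real.exp (-((m:ℝ) * (L:ℝ)/n)) ≤ Real.exp (-(1+ε') * Real.log n) := by
          apply Real.exp_le_exp.mpr
          rw [neg_mul, neg_le_neg_iff, le_div_iff₀ hn0]
          calc (1+ε') * Real.log n * n = (1 + ε') * (n * Real.log n) := by ring
            _ ≤ (m : ℝ) * L := hmL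
        have h5 : (n : ℝ) * Real.exp (-(1+ε') * Real.log n) = (n : ℝ) ^ (-ε') := by
          rw [Real.rpow_def_of_pos hn0]
          nth_rewrite 1 [← Real.exp_log hn0]
          rw [← Real.exp_add]
          congr 1
          ring
        calc (n : ℝ) * (1 - (L:ℝ)/n) ^ m ≤ (n : ℝ) * Real.exp (-((m:ℝ) * (L:ℝ)/n)) := by
              apply mul_le_mul_of_nonneg_left _ hn0.le
              rw [← h3]; exact h2
          _ ≤ (n : ℝ) * Real.exp (-(1+ε') * Real.log n) :=
              mul_le_mul_of_nonneg_left h4 hn0.le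
          _ = (n : ℝ) ^ (-ε') := h5
end

section
/- Let 0 < ε < 1 and let C > 0. For each natural number n ≥ 2, let R(n) ≥ 1 be a natural number and set Δ(n) = (1−ε)·ln(n)/R(n) + R(n)/2. Assume that R(n) ≤ Δ(n) and Δ(n) ≤ C·√(ln n) for all n. Then for every δ > 0 there exists N such that for all n ≥ N: ∏_{j=1}^{R(n)} (1 − (Δ(n)−j)/n)ⁿ ≥ (1−δ)·n^(−1+ε). -/
open Finset


lemma aux_exp (x : ℝ) (h0 : 0 ≤ x) (h2 : x ≤ 1/2) :
    Real.exp (-(x + 2*x^2)) ≤ 1 - x := by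
  have h1 : (0:ℝ) < 1 - x := by linarith
  rw [← Real.exp_log h1]
  apply Real.exp_le_exp.mpr
  have hlog : Real.log (1-x)⁻¹ ≤ (1-x)⁻¹ - 1 :=
    Real.log_le_sub_one_of_pos (by positivity)
  rw [Real.log_inv] at hlog
  have h3 : (1-x)⁻¹ ≤ 1 + x + 2*x^2 := by
    rw [inv_eq_one_div, div_le_iff₀ h1]
    nlinarith
  linarith

lemma aux_gauss (m : ℕ) : ∑ j ∈ Finset.Icc 1 m, (j:ℝ) = m*(m+1)/2 := by
  induction m with
  | zero => simp
  | succ k ih =>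
    rw [Finset.sum_Icc_succ_top (Nat.succ_le_succ (Nat.zero_le k)), ih]
    push_cast; ring

lemma aux_sqle {a b : ℝ} (ha : 0 ≤ a) (hb : 0 ≤ b) (h : a^2 ≤ b^2) : a ≤ b := by
  calc a = Real.sqrt (a^2) := (Real.sqrt_sq ha).symm
    _ ≤ Real.sqrt (b^2) := Real.sqrt_le_sqrt h
    _ = b := Real.sqrt_sq hb

set_option maxHeartbeats 1000000 in
/-- Third-phase estimate in the lower-bound proof of the hybrid rumor-spreading protocol
(case `R ≤ Δ`): with `Δ(n) = (1-ε)·ln(n)/R(n) + R(n)/2` and `Δ(n) ≤ C√(ln n)`,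
`∏_{j=1}^{R(n)} (1 - (Δ(n)-j)/n)ⁿ ≥ (1-δ)·n^(-1+ε)` for all sufficiently large `n`. -/
theorem stmt4 (ε C : ℝ) (hε : 0 < ε) (hε1 : ε < 1) (hC : 0 < C)
    (R : ℕ → ℕ) (hR : ∀ n, 2 ≤ n → 1 ≤ R n)
    (Δ : ℕ → ℝ) (hΔ : ∀ n, 2 ≤ n → Δ n = (1 - ε) * Real.log n / (R n) + (R n) / 2)
    (hRΔ : ∀ n, 2 ≤ n → (R n : ℝ) ≤ Δ n)
    (hΔC : ∀ n, 2 ≤ n → Δ n ≤ C * Real.sqrt (Real.log n)) :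
    ∀ δ : ℝ, 0 < δ → ∃ N : ℕ, ∀ n, N ≤ n →
      (∏ j ∈ Finset.Icc 1 (R n), (1 - (Δ n - j) / n) ^ n) ≥
        (1 - δ) * (n : ℝ) ^ (-1 + ε) := by
  intro δ hδ
  refine ⟨max (max ⌈(2*C)^2⌉₊ ⌈256*C^6/δ^2⌉₊) 2, fun n hn => ?_⟩
  have hn2 : 2 ≤ n := le_trans (le_max_right _ 2) hn
  have h1 : (2*C)^2 ≤ (n:ℝ) :=
    le_trans (Nat.le_ceil _) (Nat.cast_le.mpr
      (le_trans (le_trans (le_max_left _ _) (le_max_left _ 2)) hn))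
  have h2 : 256*C^6/δ^2 ≤ (n:ℝ) :=
    le_trans (Nat.le_ceil _) (Nat.cast_le.mpr
      (le_trans (le_trans (le_max_right _ _) (le_max_left _ 2)) hn))
  have hRn := hR n hn2
  have hDdef := hΔ n hn2
  have hRD := hRΔ n hn2
  have hDC := hΔC n hn2
  have hnpos : (0:ℝ) < n := by positivity
  have hn1 : (1:ℝ) ≤ n := by exact_mod_cast le_trans (by norm_num) hn2
  set L := Real.log n with hLdef
  have hL0 : 0 ≤ L := Real.log_nonneg hn1
  have hRpos : (0:ℝ) < R n := by exact_mod_cast hRn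
  have hD1 : (1:ℝ) ≤ Δ n := le_trans (by exact_mod_cast hRn) hRD
  -- √(log n) ≤ √n and C√n ≤ n/2
  have hsL : Real.sqrt L ≤ Real.sqrt n := by
    apply Real.sqrt_le_sqrt
    have := Real.log_le_sub_one_of_pos hnpos
    linarith
  have h2C : 2*C ≤ Real.sqrt n := by
    rw [show (2*C) = Real.sqrt ((2*C)^2) from (Real.sqrt_sq (by positivity)).symm]
    exact Real.sqrt_le_sqrt h1
  have hCn : C * Real.sqrt n ≤ (n:ℝ)/2 := by
    nlinarith [Real.sq_sqrt hnpos.le, Real.sqrt_nonneg (n:ℝ)]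
  have hDn : Δ n ≤ (n:ℝ)/2 := by
    calc Δ n ≤ C * Real.sqrt L := hDC
      _ ≤ C * Real.sqrt n := by nlinarith
      _ ≤ (n:ℝ)/2 := hCn
  have hD0 : 0 ≤ Δ n := by linarith
  -- t ≤ δ
  set t : ℝ := 2*C^3*(Real.sqrt L)^3 / n with htdef
  have ht : t ≤ δ := by
    rw [htdef, div_le_iff₀ hnpos]
    set s := Real.sqrt L with hsdef
    have hs0 : 0 ≤ s := Real.sqrt_nonneg _
    have hs2 : s^2 = L := Real.sq_sqrt hL0
    set u := Real.sqrt (Real.sqrt n) with hudef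
    have hu0 : 0 < u := Real.sqrt_pos.mpr (Real.sqrt_pos.mpr hnpos)
    have hu2 : u^2 = Real.sqrt n := Real.sq_sqrt (Real.sqrt_nonneg _)
    have hv1 : (1:ℝ) ≤ Real.sqrt n := by
      rw [show (1:ℝ) = Real.sqrt 1 from (Real.sqrt_one).symm]
      exact Real.sqrt_le_sqrt hn1
    have huv : u ≤ Real.sqrt n := by
      have hle : Real.sqrt (n:ℝ) ≤ (Real.sqrt n)^2 := by nlinarith
      calc u = Real.sqrt (Real.sqrt n) := hudef
        _ ≤ Real.sqrt ((Real.sqrt n)^2) := Real.sqrt_le_sqrt hle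
        _ = Real.sqrt n := Real.sqrt_sq (Real.sqrt_nonneg _)
    have hLu : L ≤ 4*u := by
      have hlu : Real.log u ≤ u := by
        have := Real.log_le_sub_one_of_pos hu0; linarith
      have hlu2 : Real.log u = L / 4 := by
        rw [hudef, Real.log_sqrt (Real.sqrt_nonneg _), Real.log_sqrt hnpos.le]
        ring
      linarith [hlu2 ▸ hlu]
    have hvn : (Real.sqrt n)^2 = (n:ℝ) := Real.sq_sqrt hnpos.le
    have hL3 : L^3 ≤ 64 * n := by
      calc L^3 ≤ (4*u)^3 := by
            apply pow_le_pow_left₀ hL0 hLu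
        _ = 64 * (u^2 * u) := by ring
        _ = 64 * (Real.sqrt n * u) := by rw [hu2]
        _ ≤ 64 * (Real.sqrt n * Real.sqrt n) := by
            have h0 : 0 ≤ Real.sqrt (n:ℝ) := Real.sqrt_nonneg _
            have := mul_le_mul_of_nonneg_left huv h0
            linarith
        _ = 64 * (Real.sqrt (n:ℝ) * Real.sqrt (n:ℝ)) := by ring
        _ = 64 * n := by rw [Real.mul_self_sqrt hnpos.le]
    have hCδ : 256*C^6 ≤ δ^2 * n := by
      have := (div_le_iff₀ (by positivity : (0:ℝ) < δ^2)).mp h2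
      linarith
    apply aux_sqle (by positivity) (by positivity)
    have hsq : (2*C^3*s^3)^2 = 4*C^6*(s^2)^3 := by ring
    rw [hsq, hs2]
    calc 4*C^6*L^3 ≤ 4*C^6*(64*n) :=
        mul_le_mul_of_nonneg_left hL3 (by positivity)
      _ = (256*C^6) * n := by ring
      _ ≤ (δ^2*n) * n := mul_le_mul_of_nonneg_right hCδ hnpos.le
      _ = (δ*n)^2 := by ring
  -- bounds on x_j
  have hx : ∀ j ∈ Finset.Icc 1 (R n), 0 ≤ (Δ n - j)/(n:ℝ) ∧ (Δ n - j)/(n:ℝ) ≤ 1/2 := by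
    intro j hj
    rw [Finset.mem_Icc] at hj
    have hj1 : (1:ℝ) ≤ j := by exact_mod_cast hj.1
    have hjR : (j:ℝ) ≤ R n := by exact_mod_cast hj.2
    constructor
    · apply div_nonneg _ hnpos.le; linarith
    · rw [div_le_iff₀ hnpos]; linarith
  -- step 1: product lower bound via exp
  have step1 : ∏ j ∈ Finset.Icc 1 (R n),
      Real.exp (-((Δ n - j)/(n:ℝ) + 2*((Δ n - j)/(n:ℝ))^2)) ^ n
      ≤ ∏ j ∈ Finset.Icc 1 (R n), (1 - (Δ n - j) / n) ^ n :=
    Finset.prod_le_prod (fun j _ => pow_nonneg (Real.exp_nonneg _) n)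
      (fun j hj => pow_le_pow_left₀ (Real.exp_nonneg _)
        (aux_exp _ (hx j hj).1 (hx j hj).2) n)
  have step2 : ∏ j ∈ Finset.Icc 1 (R n),
      Real.exp (-((Δ n - j)/(n:ℝ) + 2*((Δ n - j)/(n:ℝ))^2)) ^ n
      = Real.exp (∑ j ∈ Finset.Icc 1 (R n),
          (n:ℝ) * (-((Δ n - j)/(n:ℝ) + 2*((Δ n - j)/(n:ℝ))^2))) := by
    rw [Real.exp_sum]
    exact Finset.prod_congr rfl (fun j _ => (Real.exp_nat_mul _ n).symm)
  -- sum bounds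
  have hS1 : ∑ j ∈ Finset.Icc 1 (R n), (n:ℝ) * ((Δ n - j)/(n:ℝ))
      = (R n) * Δ n - (R n)*((R n)+1)/2 := by
    have e1 : ∑ j ∈ Finset.Icc 1 (R n), (n:ℝ) * ((Δ n - j)/(n:ℝ))
        = ∑ j ∈ Finset.Icc 1 (R n), (Δ n - (j:ℝ)) :=
      Finset.sum_congr rfl (fun j _ => mul_div_cancel₀ _ (ne_of_gt hnpos))
    rw [e1, Finset.sum_sub_distrib, Finset.sum_const, aux_gauss, Nat.card_Icc]
    simp only [Nat.add_sub_cancel, nsmul_eq_mul]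
  have hRD2 : (R n : ℝ) * Δ n = (1-ε)*L + (R n)^2/2 := by
    rw [hDdef]; field_simp
  have hS1le : ∑ j ∈ Finset.Icc 1 (R n), (n:ℝ) * ((Δ n - j)/(n:ℝ)) ≤ (1-ε)*L := by
    rw [hS1, hRD2]
    have : (1:ℝ) ≤ R n := by exact_mod_cast hRn
    nlinarith
  have hS2le : ∑ j ∈ Finset.Icc 1 (R n), (n:ℝ) * (2*((Δ n - j)/(n:ℝ))^2) ≤ t := by
    have hbd : ∀ j ∈ Finset.Icc 1 (R n),
        (n:ℝ) * (2*((Δ n - j)/(n:ℝ))^2) ≤ 2 * (Δ n)^2 / n := by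
      intro j hj
      rw [Finset.mem_Icc] at hj
      have hj1 : (1:ℝ) ≤ j := by exact_mod_cast hj.1
      have hxj : 0 ≤ (Δ n - j)/(n:ℝ) := (hx j (by rw [Finset.mem_Icc]; exact hj)).1
      have hxle : (Δ n - j)/(n:ℝ) ≤ Δ n / n := by
        gcongr
        linarith
      have hsq : ((Δ n - j)/(n:ℝ))^2 ≤ (Δ n / n)^2 := by nlinarith
      calc (n:ℝ) * (2*((Δ n - j)/(n:ℝ))^2) ≤ (n:ℝ) * (2*(Δ n / n)^2) := by nlinarith
        _ = 2 * (Δ n)^2 / n := by field_simp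
    calc ∑ j ∈ Finset.Icc 1 (R n), (n:ℝ) * (2*((Δ n - j)/(n:ℝ))^2)
        ≤ (Finset.Icc 1 (R n)).card • (2 * (Δ n)^2 / n) := Finset.sum_le_card_nsmul _ _ _ hbd
      _ = (R n : ℝ) * (2 * (Δ n)^2 / n) := by rw [Nat.card_Icc]; simp [nsmul_eq_mul]
      _ ≤ Δ n * (2 * (Δ n)^2 / n) := by
          apply mul_le_mul_of_nonneg_right hRD (by positivity)
      _ = 2 * (Δ n)^3 / n := by ring
      _ ≤ t := by
          rw [htdef, div_le_div_iff_of_pos_right hnpos]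
          have hD3 : (Δ n)^3 ≤ (C * Real.sqrt L)^3 :=
            pow_le_pow_left₀ hD0 hDC 3
          calc 2 * (Δ n)^3 ≤ 2 * (C * Real.sqrt L)^3 := by linarith
            _ = 2*C^3*(Real.sqrt L)^3 := by ring
  -- assemble
  have hsum : -((1-ε)*L) - t ≤ ∑ j ∈ Finset.Icc 1 (R n),
      (n:ℝ) * (-((Δ n - j)/(n:ℝ) + 2*((Δ n - j)/(n:ℝ))^2)) := by
    have : ∑ j ∈ Finset.Icc 1 (R n),
        (n:ℝ) * (-((Δ n - j)/(n:ℝ) + 2*((Δ n - j)/(n:ℝ))^2))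
        = -(∑ j ∈ Finset.Icc 1 (R n), (n:ℝ) * ((Δ n - j)/(n:ℝ)))
          - ∑ j ∈ Finset.Icc 1 (R n), (n:ℝ) * (2*((Δ n - j)/(n:ℝ))^2) := by
      rw [← Finset.sum_neg_distrib, ← Finset.sum_sub_distrib]
      exact Finset.sum_congr rfl (fun j _ => by ring)
    rw [this]
    linarith
  have hrpow : Real.exp (-((1-ε)*L)) = (n:ℝ)^(-1+ε) := by
    rw [Real.rpow_def_of_pos hnpos]
    ring_nf
    rfl
  calc (1 - δ) * (n:ℝ)^(-1+ε)
      ≤ (1 - t) * (n:ℝ)^(-1+ε) := by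
        apply mul_le_mul_of_nonneg_right (by linarith) (Real.rpow_nonneg hnpos.le _)
    _ ≤ Real.exp (-t) * (n:ℝ)^(-1+ε) := by
        have := Real.add_one_le_exp (-t)
        apply mul_le_mul_of_nonneg_right (by linarith) (Real.rpow_nonneg hnpos.le _)
    _ = Real.exp (-((1-ε)*L) - t) := by
        rw [← hrpow, ← Real.exp_add]; ring_nf
    _ ≤ Real.exp (∑ j ∈ Finset.Icc 1 (R n),
          (n:ℝ) * (-((Δ n - j)/(n:ℝ) + 2*((Δ n - j)/(n:ℝ))^2))) :=
        Real.exp_le_exp.mpr (by linarith [hsum])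
    _ ≤ ∏ j ∈ Finset.Icc 1 (R n), (1 - (Δ n - j) / n) ^ n := by
        rw [← step2]; exact step1
end
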